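/- arXiv:1506.06940 — 4 statements merged into one kernel-verified Lean document; each statement's English description precedes it below -/
import Mathlib

section
/- Let R be a finitely generated commutative ring (a quotient of ℤ[x₁,...,xₙ]), and let I be a maximal ideal of R. Then the residue field R/I is finite. -/
lemma int_isJacobsonRing : IsJacobsonRing ℤ := by
  rw [isJacobsonRing_iff_prime_eq]
  intro P hP
  rcases eq_or_ne P ⊥ with h | h
  · subst h
    refine le_antisymm (fun x hx => ?_) Ideal.le_jacobson
    have h1 := (Ideal.mem_jacobson_bot.mp hx) 1
    have h2 := (Ideal.mem_jacobson_bot.mp hx) (-1)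
    rw [Int.isUnit_iff] at h1 h2
    simp only [mul_one, mul_neg_one] at h1 h2
    rw [Ideal.mem_bot]
    omega
  · haveI := IsPrime.to_maximal_ideal h
    exact Ideal.jacobson_eq_self_of_isMaximal

theorem stmt_14 (R : Type*) [CommRing R] [Algebra.FiniteType ℤ R]
    (I : Ideal R) (hI : I.IsMaximal) : Finite (R ⧸ I) := by
  letI : Field (R ⧸ I) := Ideal.Quotient.field I
  haveI : IsJacobsonRing ℤ := int_isJacobsonRing
  haveI : Algebra.FiniteType ℤ (R ⧸ I) :=
    Algebra.FiniteType.of_surjective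
      (Ideal.Quotient.mkₐ ℤ I) (Ideal.Quotient.mkₐ_surjective ℤ I)
  haveI : Module.Finite ℤ (R ⧸ I) := finite_of_finite_type_of_isJacobsonRing ℤ (R ⧸ I)
  -- the kernel of ℤ → R⧸I is nonzero
  haveI : Algebra.IsIntegral ℤ (R ⧸ I) := Algebra.IsIntegral.of_finite ℤ (R ⧸ I)
  have hker : RingHom.ker (algebraMap ℤ (R ⧸ I)) ≠ ⊥ := by
    intro h
    have hinj : Function.Injective (algebraMap ℤ (R ⧸ I)) :=
      (RingHom.injective_iff_ker_eq_bot _).mpr h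
    exact Int.not_isField
      (isField_of_isIntegral_of_isField hinj (Field.toIsField (R ⧸ I)))
  obtain ⟨a, ha, ha0⟩ := Submodule.exists_mem_ne_zero_of_ne_bot hker
  apply Module.finite_of_fg_torsion
  intro x
  refine ⟨⟨a, mem_nonZeroDivisors_of_ne_zero ha0⟩, ?_⟩
  have : algebraMap ℤ (R ⧸ I) a = 0 := ha
  show a • x = 0
  rw [Algebra.smul_def, this, zero_mul]
end

section
/- Let G be a group and N ⊴ G. Suppose that for every n ∈ ℕ, every finite Y ⊆ G \ N, and every finite Φ ⊆ N, there exists a group H in a class 𝒦 and a homomorphism φ : G → H such that φ(Y) ∩ Cₙ(φ(Φ), H) = ∅. Then for every finite subset Φ ⊆ G/N and every n, there exist H ∈ 𝒦 and a map ψ : Φ → H with ψ(1) = 1 such that ψ(Φ \ {1}) is n-separated from {ψ(g)ψ(h)ψ(gh)⁻¹ : g, h, gh ∈ Φ}, i.e., G/N is 𝒦-approximable. -/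
/-- `Cn n X` : the set of `n`-fold products of conjugates of elements `x` with
`x ∈ X` or `x⁻¹ ∈ X` (the `n`-consequences of `X`). -/
def Cn {H : Type*} [Group H] (n : ℕ) (X : Set H) : Set H :=
  {w | ∃ x g : Fin n → H, (∀ i, x i ∈ X ∨ (x i)⁻¹ ∈ X) ∧
    w = (List.ofFn fun i => (g i)⁻¹ * x i * g i).prod}

theorem stmt_16 {G : Type*} [Group G] (N : Subgroup G) [N.Normal]
    {ι : Type*} (K : ι → Type*) [∀ i, Group (K i)]
    (hsep : ∀ (n : ℕ) (Y Φ : Finset G), (Y : Set G) ⊆ ((N : Set G))ᶜ →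
      (Φ : Set G) ⊆ (N : Set G) →
      ∃ (i : ι) (φ : G →* K i), ((fun g => φ g) '' (Y : Set G)) ∩
        Cn n ((fun g => φ g) '' (Φ : Set G)) = ∅) :
    ∀ (Φ : Finset (G ⧸ N)) (n : ℕ), ∃ (i : ι) (ψ : G ⧸ N → K i),
      ψ 1 = 1 ∧
      (ψ '' ((Φ : Set (G ⧸ N)) \ {1})) ∩
        Cn n {z : K i | ∃ g h : G ⧸ N, g ∈ Φ ∧ h ∈ Φ ∧ g * h ∈ Φ ∧
          z = ψ g * ψ h * (ψ (g * h))⁻¹} = ∅ := by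
  classical
  intro Φ n
  set s : G ⧸ N → G := fun q => if q = 1 then 1 else Quotient.out q with hs
  have hmk : ∀ q, (QuotientGroup.mk (s q) : G ⧸ N) = q := by
    intro q; by_cases h : q = 1
    · simp [hs, h]
    · simp only [hs, if_neg h]; exact Quotient.out_eq' q
  set Y : Finset G := (Φ \ {1}).image s with hYdef
  set D : Finset G := ((Φ ×ˢ Φ).filter (fun p => p.1 * p.2 ∈ Φ)).image
    (fun p => s p.1 * s p.2 * (s (p.1 * p.2))⁻¹) with hDdef
  have hY : (Y : Set G) ⊆ ((N : Set G))ᶜ := by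
    intro x hx
    simp only [hYdef, Finset.coe_image, Set.mem_image, Finset.mem_coe,
      Finset.mem_sdiff, Finset.mem_singleton] at hx
    obtain ⟨q, ⟨hq, hq1⟩, rfl⟩ := hx
    intro hxN
    apply hq1
    have := (QuotientGroup.eq_one_iff (s q)).2 hxN
    rwa [hmk] at this
  have hD : (D : Set G) ⊆ (N : Set G) := by
    intro x hx
    simp only [hDdef, Finset.coe_image, Set.mem_image, Finset.mem_coe,
      Finset.mem_filter, Finset.mem_product] at hx
    obtain ⟨⟨a, b⟩, ⟨⟨ha, hb⟩, hab⟩, rfl⟩ := hx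
    have : (QuotientGroup.mk (s a * s b * (s (a * b))⁻¹) : G ⧸ N) = 1 := by
      rw [QuotientGroup.mk_mul, QuotientGroup.mk_mul, QuotientGroup.mk_inv,
        hmk, hmk, hmk, mul_inv_cancel]
    exact (QuotientGroup.eq_one_iff _).1 this
  obtain ⟨i, φ, hφ⟩ := hsep n Y D hY hD
  refine ⟨i, fun q => φ (s q), by simp [hs], ?_⟩
  have h1 : (fun q => φ (s q)) '' ((Φ : Set (G ⧸ N)) \ {1})
      = (fun g => φ g) '' (Y : Set G) := by
    rw [show ((fun q => φ (s q)) '' ((Φ : Set (G ⧸ N)) \ {1}))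
        = (fun g => φ g) '' (s '' ((Φ : Set (G ⧸ N)) \ {1})) from
        (Set.image_image _ _ _).symm]
    congr 1
    rw [hYdef, Finset.coe_image, Finset.coe_sdiff, Finset.coe_singleton]
  have h2 : {z : K i | ∃ g h : G ⧸ N, g ∈ Φ ∧ h ∈ Φ ∧ g * h ∈ Φ ∧
      z = φ (s g) * φ (s h) * (φ (s (g * h)))⁻¹} = (fun g => φ g) '' (D : Set G) := by
    ext z
    simp only [hDdef, Finset.coe_image, Set.mem_image, Finset.mem_coe,
      Finset.mem_filter, Finset.mem_product, Set.mem_setOf_eq]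
    constructor
    · rintro ⟨g, h, hg, hh, hgh, rfl⟩
      exact ⟨_, ⟨⟨g, h⟩, ⟨⟨hg, hh⟩, hgh⟩, rfl⟩, by simp⟩
    · rintro ⟨x, ⟨⟨g, h⟩, ⟨⟨hg, hh⟩, hgh⟩, rfl⟩, rfl⟩
      exact ⟨g, h, hg, hh, hgh, by simp⟩
  rw [h1, h2]
  exact hφ
end

section
/- Let G be a group, Y a finite subset of G, X ⊆ G, and ε > 0. Suppose for each y ∈ Y there is a homomorphism φ_y : G → A_{m_y} (alternating group) with normalized Hamming length ‖φ_y(y)‖ ≥ 1/2 and ‖φ_y(x)‖ < ε for all x ∈ X. Then there exist m and a homomorphism ψ : G → A_m such that ‖ψ(y)‖ ≥ 1/(2|Y|) for every y ∈ Y and ‖ψ(x)‖ < ε for every x ∈ X. -/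
open Equiv

/-- The normalized Hamming length of a permutation of a finite type. -/
noncomputable def hnorm {α : Type*} [Fintype α] (h : Equiv.Perm α) : ℝ :=
  (Nat.card {x : α | h x ≠ x} : ℝ) / (Fintype.card α : ℝ)

/-- The number of moved points of a permutation. -/
noncomputable def mvc {α : Type*} (h : Equiv.Perm α) : ℕ :=
  Nat.card {x : α | h x ≠ x}

lemma hnorm_def {α : Type*} [Fintype α] (h : Equiv.Perm α) :
    hnorm h = (mvc h : ℝ) / (Fintype.card α : ℝ) := rfl

lemma mvc_permCongr {α β : Type*} (e : α ≃ β) (h : Equiv.Perm α) :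
    mvc (e.permCongr h) = mvc h :=
  Nat.card_congr (e.subtypeEquiv fun a => by simp).symm

lemma nat_card_sigma' {ι : Type*} [Fintype ι] (S : ι → Type*) [∀ i, Finite (S i)] :
    Nat.card (Σ i, S i) = ∑ i, Nat.card (S i) := by
  letI : ∀ i, Fintype (S i) := fun i => Fintype.ofFinite _
  simp [Nat.card_eq_fintype_card]

lemma mvc_prodCongrRight {K β : Type*} [Fintype K] [Finite β] (σ : K → Equiv.Perm β) :
    mvc (Equiv.prodCongrRight σ) = ∑ a : K, mvc (σ a) := by
  have key : ∀ p : K × β, Equiv.prodCongrRight σ p ≠ p ↔ σ p.1 p.2 ≠ p.2 := by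
    rintro ⟨a, b⟩; simp
  calc Nat.card {p : K × β | Equiv.prodCongrRight σ p ≠ p}
      = Nat.card (Σ a : K, {x : β // σ a x ≠ x}) := Nat.card_congr
        { toFun := fun p => ⟨p.1.1, p.1.2, (key p.1).mp p.2⟩
          invFun := fun q => ⟨(q.1, q.2.1), (key (q.1, q.2.1)).mpr q.2.2⟩
          left_inv := fun p => rfl
          right_inv := fun q => rfl }
    _ = ∑ a : K, Nat.card {x : β // σ a x ≠ x} := nat_card_sigma' _
    _ = ∑ a : K, mvc (σ a) := rfl

lemma permCongr_mul {α β : Type*} (e : α ≃ β) (p q : Equiv.Perm α) :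
    e.permCongr (p * q) = e.permCongr p * e.permCongr q := by
  ext x; simp [Equiv.Perm.mul_apply]

lemma prodCongrRight_mul' {K β : Type*} (σ τ : K → Equiv.Perm β) :
    Equiv.prodCongrRight (fun a => σ a * τ a) =
      Equiv.prodCongrRight σ * Equiv.prodCongrRight τ := by
  ext ⟨a, b⟩ <;> simp [Equiv.Perm.mul_apply]

set_option maxHeartbeats 1000000 in
theorem stmt_17 {G : Type*} [Group G] (Y : Finset G) (X : Set G) (ε : ℝ) (hε : 0 < ε)
    (m : Y → ℕ) (φ : ∀ y : Y, G →* alternatingGroup (Fin (m y)))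
    (hy : ∀ y : Y, (1 : ℝ) / 2 ≤ hnorm ((φ y (y : G) : Equiv.Perm (Fin (m y)))))
    (hx : ∀ y : Y, ∀ x ∈ X, hnorm ((φ y x : Equiv.Perm (Fin (m y)))) < ε) :
    ∃ (M : ℕ) (ψ : G →* alternatingGroup (Fin M)),
      (∀ y ∈ Y, (1 : ℝ) / (2 * Y.card) ≤ hnorm ((ψ y : Equiv.Perm (Fin M)))) ∧
      (∀ x ∈ X, hnorm ((ψ x : Equiv.Perm (Fin M))) < ε) := by
  classical
  have hm : ∀ y : Y, 0 < m y := by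
    intro y
    rcases Nat.eq_zero_or_pos (m y) with h | h
    · exfalso
      have := hy y
      rw [hnorm_def, Fintype.card_fin] at this
      have h0 : ((m y : ℕ) : ℝ) = 0 := by rw [h]; norm_num
      rw [h0, div_zero] at this
      norm_num at this
    · exact h
  set n := Y.card with hn
  set N := ∏ y : Y, m y with hN
  have hNpos : 0 < N := Finset.prod_pos fun y _ => hm y
  set K : Y → Type _ := fun y => ∀ z : {z : Y // z ≠ y}, Fin (m z.1) with hKdef
  have hKpos : ∀ y : Y, 0 < Fintype.card (K y) :=
    fun y => Fintype.card_pos_iff.mpr ⟨fun z => ⟨0, hm z.1⟩⟩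
  have hK : ∀ y : Y, Fintype.card (K y) * m y = N := by
    intro y
    have h1 : Fintype.card (K y) = ∏ z : {z : Y // z ≠ y}, m z.1 := by
      simp [hKdef]
    have h2 : ∏ z : {z : Y // z ≠ y}, m z.1 = ∏ z ∈ Finset.univ.erase y, m z :=
      (Finset.prod_subtype (Finset.univ.erase y) (fun z => by simp) m).symm
    rw [h1, h2, hN, ← Finset.prod_erase_mul Finset.univ m (Finset.mem_univ y)]
  let e : ∀ y : Y, (K y × Fin (m y)) ≃ Fin N := fun y =>
    Fintype.equivFinOfCardEq (by rw [Fintype.card_prod, Fintype.card_fin, hK y])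
  let F : G → Y → Equiv.Perm (Fin N) := fun g y =>
    (e y).permCongr (Equiv.prodCongrRight fun _ : K y => (φ y g : Equiv.Perm (Fin (m y))))
  have hFmul : ∀ (g₁ g₂ : G) (y : Y), F (g₁ * g₂) y = F g₁ y * F g₂ y := by
    intro g₁ g₂ y
    show (e y).permCongr _ = _
    rw [show (fun _ : K y => ((φ y (g₁ * g₂) : Equiv.Perm (Fin (m y))))) =
        fun a : K y => ((φ y g₁ : Equiv.Perm (Fin (m y)))) *
          ((φ y g₂ : Equiv.Perm (Fin (m y)))) from funext fun _ => by
        rw [map_mul]; rfl]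
    rw [prodCongrRight_mul' (fun _ : K y => ((φ y g₁ : Equiv.Perm (Fin (m y)))))
      (fun _ : K y => ((φ y g₂ : Equiv.Perm (Fin (m y)))))]
    exact _root_.permCongr_mul _ _ _
  let M : ℕ := n * N
  have hMcard : Fintype.card (Y × Fin N) = M := by
    rw [Fintype.card_prod, Fintype.card_fin, Fintype.card_coe]
  let E : (Y × Fin N) ≃ Fin M := Fintype.equivFinOfCardEq hMcard
  let Ψ : G → Equiv.Perm (Fin M) := fun g => E.permCongr (Equiv.prodCongrRight (F g))
  have hΨmul : ∀ g₁ g₂ : G, Ψ (g₁ * g₂) = Ψ g₁ * Ψ g₂ := by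
    intro g₁ g₂
    show E.permCongr _ = _
    rw [show F (g₁ * g₂) = fun y => F g₁ y * F g₂ y from funext fun y => hFmul g₁ g₂ y]
    rw [prodCongrRight_mul' (F g₁) (F g₂)]
    exact _root_.permCongr_mul _ _ _
  have hΨone : Ψ 1 = 1 := by
    have := hΨmul 1 1
    rw [mul_one] at this
    exact mul_right_cancel (by rw [← this, one_mul])
  have hsign : ∀ g : G, Equiv.Perm.sign (Ψ g) = 1 := by
    intro g
    show Equiv.Perm.sign (E.permCongr _) = 1
    rw [Equiv.Perm.sign_permCongr, Equiv.Perm.sign_prodCongrRight]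
    refine Finset.prod_eq_one fun y _ => ?_
    show Equiv.Perm.sign ((e y).permCongr _) = 1
    rw [Equiv.Perm.sign_permCongr, Equiv.Perm.sign_prodCongrRight]
    refine Finset.prod_eq_one fun _ _ => ?_
    exact Equiv.Perm.mem_alternatingGroup.mp (φ y g).2
  let ψh : G →* Equiv.Perm (Fin M) :=
    { toFun := Ψ, map_one' := hΨone, map_mul' := hΨmul }
  let ψ : G →* alternatingGroup (Fin M) :=
    ψh.codRestrict (alternatingGroup (Fin M))
      (fun g => Equiv.Perm.mem_alternatingGroup.mpr (hsign g))
  have hcoe : ∀ g : G, ((ψ g : Equiv.Perm (Fin M))) = Ψ g := fun g => rfl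
  have hmv : ∀ g : G, mvc (Ψ g) =
      ∑ y : Y, Fintype.card (K y) * mvc ((φ y g : Equiv.Perm (Fin (m y)))) := by
    intro g
    calc mvc (Ψ g) = mvc (Equiv.prodCongrRight (F g)) := mvc_permCongr _ _
      _ = ∑ y : Y, mvc (F g y) := mvc_prodCongrRight _
      _ = ∑ y : Y, Fintype.card (K y) * mvc ((φ y g : Equiv.Perm (Fin (m y)))) := by
          refine Finset.sum_congr rfl fun y _ => ?_
          calc mvc (F g y)
              = mvc (Equiv.prodCongrRight fun _ : K y =>
                  (φ y g : Equiv.Perm (Fin (m y)))) := mvc_permCongr _ _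
            _ = ∑ _a : K y, mvc ((φ y g : Equiv.Perm (Fin (m y)))) := mvc_prodCongrRight _
            _ = Fintype.card (K y) * mvc ((φ y g : Equiv.Perm (Fin (m y)))) := by
                rw [Finset.sum_const, Finset.card_univ, smul_eq_mul]
  have hhn : ∀ g : G, hnorm ((ψ g : Equiv.Perm (Fin M))) =
      (∑ y : Y, (Fintype.card (K y) : ℝ) *
        (mvc ((φ y g : Equiv.Perm (Fin (m y)))) : ℝ)) / (n * N : ℝ) := by
    intro g
    rw [hcoe, hnorm_def, Fintype.card_fin, hmv g]
    push_cast
    have hM' : ((M : ℕ) : ℝ) = (n : ℝ) * (N : ℝ) := by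
      rw [show M = n * N from rfl]; push_cast; ring
    rw [hM']
  refine ⟨M, ψ, ?_, ?_⟩
  · intro y hyY
    have hnY : 0 < n := by
      rw [hn]; exact Finset.card_pos.mpr ⟨y, hyY⟩
    set y₀ : Y := ⟨y, hyY⟩
    have h1 : (m y₀ : ℝ) / 2 ≤ (mvc ((φ y₀ (y : G) : Equiv.Perm (Fin (m y₀)))) : ℝ) := by
      have := hy y₀
      rw [hnorm_def, Fintype.card_fin] at this
      have hmpos : (0 : ℝ) < (m y₀ : ℝ) := by exact_mod_cast hm y₀
      rw [div_le_div_iff₀ (by norm_num) hmpos] at this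
      linarith
    have hterm : (N : ℝ) / 2 ≤ (Fintype.card (K y₀) : ℝ) *
        (mvc ((φ y₀ (y : G) : Equiv.Perm (Fin (m y₀)))) : ℝ) := by
      have hcK : (Fintype.card (K y₀) : ℝ) * (m y₀ : ℝ) = (N : ℝ) := by
        exact_mod_cast congrArg (Nat.cast : ℕ → ℝ) (hK y₀)
      have hcKpos : (0:ℝ) < (Fintype.card (K y₀) : ℝ) := by exact_mod_cast hKpos y₀
      nlinarith [hcKpos]
    have hsum : (N : ℝ) / 2 ≤ ∑ z : Y, (Fintype.card (K z) : ℝ) *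
        (mvc ((φ z (y : G) : Equiv.Perm (Fin (m z)))) : ℝ) := by
      refine le_trans hterm ?_
      refine Finset.single_le_sum (f := fun z : Y => (Fintype.card (K z) : ℝ) *
        (mvc ((φ z (y : G) : Equiv.Perm (Fin (m z)))) : ℝ)) (fun z _ => ?_) (Finset.mem_univ y₀)
      positivity
    rw [hhn]
    have hnNpos : (0 : ℝ) < (n : ℝ) * (N : ℝ) := by
      have : (0:ℝ) < (n:ℝ) := by exact_mod_cast hnY
      have : (0:ℝ) < (N:ℝ) := by exact_mod_cast hNpos
      positivity
    rw [div_le_div_iff₀ (by positivity) hnNpos]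
    have hnn : (0:ℝ) < (n:ℝ) := by exact_mod_cast hnY
    nlinarith [hsum]
  · intro x hxX
    by_cases hYe : Y = ∅
    · have : (Fintype.card (Fin M) : ℝ) = 0 := by
        simp [M, hn, hYe]
      rw [hnorm, this, div_zero]
      exact hε
    · have hne : Y.Nonempty := Finset.nonempty_iff_ne_empty.mpr hYe
      have : Nonempty Y := ⟨⟨hne.choose, hne.choose_spec⟩⟩
      have hnY : 0 < n := by rw [hn]; exact Finset.card_pos.mpr hne
      rw [hhn]
      have hnNpos : (0 : ℝ) < (n : ℝ) * (N : ℝ) := by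
        have h1 : (0:ℝ) < (n:ℝ) := by exact_mod_cast hnY
        have h2 : (0:ℝ) < (N:ℝ) := by exact_mod_cast hNpos
        positivity
      rw [div_lt_iff₀ hnNpos]
      calc ∑ z : Y, (Fintype.card (K z) : ℝ) *
            (mvc ((φ z x : Equiv.Perm (Fin (m z)))) : ℝ)
          < ∑ z : Y, (Fintype.card (K z) : ℝ) * (ε * (m z : ℝ)) := by
            refine Finset.sum_lt_sum_of_nonempty Finset.univ_nonempty fun z _ => ?_
            have hcKz : (0:ℝ) < (Fintype.card (K z) : ℝ) := by exact_mod_cast hKpos z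
            refine mul_lt_mul_of_pos_left ?_ hcKz
            have := hx z x hxX
            rw [hnorm_def, Fintype.card_fin] at this
            have hmpos : (0 : ℝ) < (m z : ℝ) := by exact_mod_cast hm z
            rw [div_lt_iff₀ hmpos] at this
            linarith [this]
        _ = ε * ((n : ℝ) * (N : ℝ)) := by
            have : ∀ z : Y, (Fintype.card (K z) : ℝ) * (ε * (m z : ℝ)) =
                ε * (N : ℝ) := by
              intro z
              have hcK : (Fintype.card (K z) : ℝ) * (m z : ℝ) = (N : ℝ) := by
                exact_mod_cast congrArg (Nat.cast : ℕ → ℝ) (hK z)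
              ring_nf
              nlinarith [hcK]
            rw [Finset.sum_congr rfl fun z _ => this z, Finset.sum_const,
              Finset.card_univ, Fintype.card_coe, ← hn, nsmul_eq_mul]
            ring
end

section
/- Let F be a free group, N ⊴ F, and 𝒦 a class of groups. If F/N is 𝒦-approximable, then N is a 𝒦-separated normal subgroup of F: for every n ∈ ℕ, every finite Y ⊆ F \ N, and every finite Φ ⊆ N, there exists a homomorphism φ : F → H with H ∈ 𝒦 such that φ(Y) ∩ Cₙ(φ(Φ), H) = ∅. -/
namespace CnAux
variable {H : Type*} [Group H] {X : Set H} {n : ℕ} {w v : H}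

lemma mem_Cn_iff : w ∈ Cn n X ↔ ∃ L : List (H × H), L.length = n ∧
    (∀ p ∈ L, p.1 ∈ X ∨ p.1⁻¹ ∈ X) ∧
    w = (L.map fun p => p.2⁻¹ * p.1 * p.2).prod := by
  constructor
  · rintro ⟨x, g, hx, rfl⟩
    refine ⟨List.ofFn fun i => (x i, g i), by simp, ?_, ?_⟩
    · intro p hp
      rw [List.mem_ofFn] at hp
      obtain ⟨i, rfl⟩ := hp
      exact hx i
    · rw [List.map_ofFn]; rfl
  · rintro ⟨L, hlen, hX, rfl⟩
    subst hlen
    refine ⟨fun i => (L.get i).1, fun i => (L.get i).2, fun i => hX _ (L.get_mem i), ?_⟩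
    conv_lhs => rw [← List.ofFn_get L]
    rw [List.map_ofFn]; rfl

lemma one_mem_Cn_zero : (1 : H) ∈ Cn 0 X :=
  mem_Cn_iff.mpr ⟨[], rfl, by simp, by simp⟩

lemma eq_one_of_mem_Cn_zero (h : w ∈ Cn 0 X) : w = 1 := by
  obtain ⟨L, hlen, -, rfl⟩ := mem_Cn_iff.mp h
  simp [List.eq_nil_of_length_eq_zero hlen]

lemma mem_Cn_one (hw : w ∈ X ∨ w⁻¹ ∈ X) : w ∈ Cn 1 X :=
  mem_Cn_iff.mpr ⟨[(w, 1)], rfl, by simpa using hw, by simp⟩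

lemma mul_mem_Cn {a b : ℕ} (hw : w ∈ Cn a X) (hv : v ∈ Cn b X) : w * v ∈ Cn (a + b) X := by
  obtain ⟨L, hL, hXL, rfl⟩ := mem_Cn_iff.mp hw
  obtain ⟨M, hM, hXM, rfl⟩ := mem_Cn_iff.mp hv
  refine mem_Cn_iff.mpr ⟨L ++ M, by simp [hL, hM], ?_, by simp⟩
  intro p hp
  rcases List.mem_append.mp hp with h | h
  · exact hXL p h
  · exact hXM p h

lemma Cn_mono (hX : (1 : H) ∈ X) {a b : ℕ} (hab : a ≤ b) : Cn a X ⊆ Cn b X := by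
  intro w hw
  obtain ⟨L, hL, hXL, rfl⟩ := mem_Cn_iff.mp hw
  refine mem_Cn_iff.mpr ⟨L ++ List.replicate (b - a) ((1 : H), (1 : H)), by simp [hL]; omega, ?_, ?_⟩
  · intro p hp
    rcases List.mem_append.mp hp with h | h
    · exact hXL p h
    · rw [List.eq_of_mem_replicate h]; exact Or.inl hX
  · simp [List.map_replicate, List.prod_replicate]

lemma conj_mem_Cn (hw : w ∈ Cn n X) (k : H) : k⁻¹ * w * k ∈ Cn n X := by
  obtain ⟨L, hL, hXL, rfl⟩ := mem_Cn_iff.mp hw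
  refine mem_Cn_iff.mpr ⟨L.map fun p => (p.1, p.2 * k), by simp [hL], ?_, ?_⟩
  · intro p hp
    obtain ⟨q, hq, rfl⟩ := List.mem_map.mp hp
    exact hXL q hq
  · rw [List.map_map]
    clear hXL hw hL
    induction L with
    | nil => simp
    | cons q L ih =>
      simp only [List.map_cons, List.prod_cons, Function.comp] at ih ⊢
      rw [← ih]
      group

lemma inv_mem_Cn (hw : w ∈ Cn n X) : w⁻¹ ∈ Cn n X := by
  obtain ⟨L, hL, hXL, rfl⟩ := mem_Cn_iff.mp hw
  refine mem_Cn_iff.mpr ⟨L.reverse.map fun p => (p.1⁻¹, p.2), by simp [hL], ?_, ?_⟩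
  · intro p hp
    obtain ⟨q, hq, rfl⟩ := List.mem_map.mp hp
    rcases hXL q (List.mem_reverse.mp hq) with h | h
    · exact Or.inr (by simpa using h)
    · exact Or.inl h
  · rw [List.prod_inv_reverse, List.map_map, ← List.map_reverse, List.map_map]
    congr 1
    apply List.map_congr_left
    intro p _
    simp [Function.comp, mul_assoc]

lemma prod_mem_Cn {m : ℕ} (l : List H) (h : ∀ y ∈ l, y ∈ Cn m X) :
    l.prod ∈ Cn (l.length * m) X := by
  induction l with
  | nil => simpa using one_mem_Cn_zero
  | cons y l ih =>
    rw [List.prod_cons]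
    have := mul_mem_Cn (h y (by simp)) (ih fun z hz => h z (by simp [hz]))
    simpa [Nat.succ_mul, Nat.add_comm] using this

lemma Cn_comp (hX : (1 : H) ∈ X) {a m : ℕ} : Cn a (Cn m X) ⊆ Cn (a * m) X := by
  intro w hw
  obtain ⟨L, hL, hXL, rfl⟩ := mem_Cn_iff.mp hw
  have : ∀ y ∈ L.map fun p => p.2⁻¹ * p.1 * p.2, y ∈ Cn m X := by
    intro y hy
    obtain ⟨q, hq, rfl⟩ := List.mem_map.mp hy
    rcases hXL q hq with h | h
    · exact conj_mem_Cn h _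
    · exact conj_mem_Cn (by simpa using inv_mem_Cn h) _
  have := prod_mem_Cn _ this
  simpa [hL] using this

lemma Cn_subset_Cn {X' : Set H} (hXX' : X ⊆ X') : Cn n X ⊆ Cn n X' := by
  rintro w ⟨x, g, hx, rfl⟩
  exact ⟨x, g, fun i => (hx i).imp (@hXX' _) (@hXX' _), rfl⟩

end CnAux


section FG
variable {α : Type*} [DecidableEq α]

/-- the list of letters (generators or inverses of generators) of a free group element -/
def fgLetters (w : FreeGroup α) : List (FreeGroup α) :=
  w.toWord.map fun p => cond p.2 (FreeGroup.of p.1) (FreeGroup.of p.1)⁻¹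

lemma fgLetters_mk (l : List (α × Bool)) :
    FreeGroup.mk l = (l.map fun p => cond p.2 (FreeGroup.of p.1) (FreeGroup.of p.1)⁻¹).prod := by
  induction l with
  | nil => rfl
  | cons p l ih =>
    rw [List.map_cons, List.prod_cons, ← ih]
    rcases p with ⟨a, b⟩
    cases b <;>
      simp [FreeGroup.of, ← FreeGroup.mul_mk, FreeGroup.inv_mk, FreeGroup.invRev] <;>
      rw [FreeGroup.mul_mk] <;> rfl

lemma fgLetters_prod (w : FreeGroup α) : (fgLetters w).prod = w := by
  conv_rhs => rw [← FreeGroup.mk_toWord (x := w)]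
  exact (fgLetters_mk _).symm

lemma mem_fgLetters {w x : FreeGroup α} (hx : x ∈ fgLetters w) :
    ∃ a, x = FreeGroup.of a ∨ x = (FreeGroup.of a)⁻¹ := by
  obtain ⟨p, _, rfl⟩ := List.mem_map.mp hx
  rcases p with ⟨a, b⟩
  cases b
  · exact ⟨a, Or.inr rfl⟩
  · exact ⟨a, Or.inl rfl⟩

end FG


theorem stmt_19 {α : Type*} (N : Subgroup (FreeGroup α)) [N.Normal]
    {ι : Type*} (K : ι → Type*) [∀ i, Group (K i)]
    (happrox : ∀ (Φ : Finset (FreeGroup α ⧸ N)) (n : ℕ),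
      ∃ (i : ι) (ψ : FreeGroup α ⧸ N → K i),
        ψ 1 = 1 ∧
        (ψ '' ((Φ : Set (FreeGroup α ⧸ N)) \ {1})) ∩
          Cn n {z : K i | ∃ g h : FreeGroup α ⧸ N, g ∈ Φ ∧ h ∈ Φ ∧ g * h ∈ Φ ∧
            z = ψ g * ψ h * (ψ (g * h))⁻¹} = ∅) :
    ∀ (n : ℕ) (Y Φ : Finset (FreeGroup α)),
      (Y : Set (FreeGroup α)) ⊆ ((N : Set (FreeGroup α)))ᶜ →
      (Φ : Set (FreeGroup α)) ⊆ (N : Set (FreeGroup α)) →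
      ∃ (i : ι) (φ : FreeGroup α →* K i),
        ((fun g => φ g) '' (Y : Set (FreeGroup α))) ∩
          Cn n ((fun g => φ g) '' (Φ : Set (FreeGroup α))) = ∅ := by
  classical
  intro n Y Φ hY hΦ
  set π : FreeGroup α →* FreeGroup α ⧸ N := QuotientGroup.mk' N with hπ
  set S : Finset (FreeGroup α) := Y ∪ Φ with hS
  set m : ℕ := S.sup fun w => (fgLetters w).length with hm
  set Φ' : Finset (FreeGroup α ⧸ N) := insert 1 (S.biUnion fun w =>
      (((fgLetters w).map fun x => π x).toFinset ∪ ((fgLetters w).map fun x => π x⁻¹).toFinset) ∪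
      ((List.range ((fgLetters w).length + 1)).map fun k => π ((fgLetters w).take k).prod).toFinset)
    with hΦ'
  have hone : (1 : FreeGroup α ⧸ N) ∈ Φ' := Finset.mem_insert_self _ _
  have hlet1 : ∀ w ∈ S, ∀ x ∈ fgLetters w, π x ∈ Φ' := by
    intro w hw x hx
    refine Finset.mem_insert_of_mem (Finset.mem_biUnion.mpr ⟨w, hw,
      Finset.mem_union_left _ (Finset.mem_union_left _ ?_)⟩)
    simp only [List.mem_toFinset, List.mem_map]
    exact ⟨x, hx, rfl⟩
  have hlet2 : ∀ w ∈ S, ∀ x ∈ fgLetters w, π x⁻¹ ∈ Φ' := by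
    intro w hw x hx
    refine Finset.mem_insert_of_mem (Finset.mem_biUnion.mpr ⟨w, hw,
      Finset.mem_union_left _ (Finset.mem_union_right _ ?_)⟩)
    simp only [List.mem_toFinset, List.mem_map]
    exact ⟨x, hx, rfl⟩
  have hpre : ∀ w ∈ S, ∀ k ≤ (fgLetters w).length, π ((fgLetters w).take k).prod ∈ Φ' := by
    intro w hw k hk
    refine Finset.mem_insert_of_mem (Finset.mem_biUnion.mpr ⟨w, hw, Finset.mem_union_right _ ?_⟩)
    simp only [List.mem_toFinset, List.mem_map, List.mem_range]
    exact ⟨k, by omega, rfl⟩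
  have hπS : ∀ w ∈ S, π w ∈ Φ' := by
    intro w hw
    have := hpre w hw (fgLetters w).length le_rfl
    rwa [List.take_length, fgLetters_prod] at this
  obtain ⟨i, ψ, hψ1, hdisj⟩ := happrox Φ' (2 * m * (n + 1))
  set D : Set (K i) := {z : K i | ∃ g h : FreeGroup α ⧸ N, g ∈ Φ' ∧ h ∈ Φ' ∧ g * h ∈ Φ' ∧
      z = ψ g * ψ h * (ψ (g * h))⁻¹} with hD
  have hD1 : (1 : K i) ∈ D := ⟨1, 1, hone, hone, by simpa using hone, by simp [hψ1]⟩
  set φ : FreeGroup α →* K i := FreeGroup.lift fun a => ψ (π (FreeGroup.of a)) with hφ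
  have hletterC : ∀ w ∈ S, ∀ x ∈ fgLetters w, (ψ (π x))⁻¹ * φ x ∈ Cn 1 D := by
    intro w hw x hx
    have hx1 := hlet1 w hw x hx
    have hx2 := hlet2 w hw x hx
    obtain ⟨a, ha | ha⟩ := mem_fgLetters hx
    · subst ha
      rw [show φ (FreeGroup.of a) = ψ (π (FreeGroup.of a)) from FreeGroup.lift_apply_of,
        inv_mul_cancel]
      exact CnAux.mem_Cn_one (Or.inl hD1)
    · subst ha
      have hd : ψ (π (FreeGroup.of a)) * ψ (π (FreeGroup.of a)⁻¹) *
          (ψ (π (FreeGroup.of a) * π (FreeGroup.of a)⁻¹))⁻¹ ∈ D :=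
        ⟨π (FreeGroup.of a), π (FreeGroup.of a)⁻¹, by simpa using hx2, hx1, by simp [hone], rfl⟩
      rw [show π (FreeGroup.of a) * π (FreeGroup.of a)⁻¹ = 1 by simp, hψ1] at hd
      have hval : (ψ (π (FreeGroup.of a)⁻¹))⁻¹ * φ (FreeGroup.of a)⁻¹ =
          (ψ (π (FreeGroup.of a)) * ψ (π (FreeGroup.of a)⁻¹) * 1⁻¹)⁻¹ := by
        rw [map_inv φ, show φ (FreeGroup.of a) = ψ (π (FreeGroup.of a)) from FreeGroup.lift_apply_of]
        group
      rw [hval]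
      exact CnAux.mem_Cn_one (Or.inr (by simpa using hd))
  have key : ∀ l : List (FreeGroup α),
      (∀ x ∈ l, (ψ (π x))⁻¹ * φ x ∈ Cn 1 D) →
      (∀ x ∈ l, π x ∈ Φ') →
      (∀ k ≤ l.length, π (l.take k).prod ∈ Φ') →
      φ l.prod * (ψ (π l.prod))⁻¹ ∈ Cn (2 * l.length) D := by
    intro l
    induction l using List.reverseRecOn with
    | nil => intro _ _ _; simpa [hψ1] using CnAux.one_mem_Cn_zero
    | append_singleton l x ih =>
      intro hC hL hP
      have ih' := ih (fun z hz => hC z (by simp [hz])) (fun z hz => hL z (by simp [hz]))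
        (fun k hk => by
          have h := hP k (by simp; omega)
          rwa [List.take_append_of_le_length hk] at h)
      have hpΦ : π l.prod ∈ Φ' := by
        have h := hP l.length (by simp)
        rwa [List.take_append_of_le_length le_rfl, List.take_length] at h
      have huΦ : π x ∈ Φ' := hL x (by simp)
      have hpuΦ : π l.prod * π x ∈ Φ' := by
        have h := hP (l.length + 1) (by simp)
        rw [List.take_of_length_le (by simp), List.prod_append, List.prod_singleton,
          map_mul] at h
        exact h
      have hd : ψ (π l.prod) * ψ (π x) * (ψ (π l.prod * π x))⁻¹ ∈ D :=
        ⟨π l.prod, π x, hpΦ, huΦ, hpuΦ, rfl⟩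
      have he : (ψ (π x))⁻¹ * φ x ∈ Cn 1 D := hC x (by simp)
      have hconj : ψ (π l.prod * π x) * ((ψ (π x))⁻¹ * φ x) * (ψ (π l.prod * π x))⁻¹ ∈
          Cn 1 D := by
        simpa [mul_assoc] using CnAux.conj_mem_Cn he (ψ (π l.prod * π x))⁻¹
      have htot := CnAux.mul_mem_Cn (CnAux.mul_mem_Cn ih' (CnAux.mem_Cn_one (Or.inl hd))) hconj
      have heq : φ l.prod * (ψ (π l.prod))⁻¹ * (ψ (π l.prod) * ψ (π x) * (ψ (π l.prod * π x))⁻¹) *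
          (ψ (π l.prod * π x) * ((ψ (π x))⁻¹ * φ x) * (ψ (π l.prod * π x))⁻¹) =
          φ (l ++ [x]).prod * (ψ (π (l ++ [x]).prod))⁻¹ := by
        rw [List.prod_append, List.prod_singleton, map_mul, map_mul]
        group
      rw [show 2 * (l ++ [x]).length = 2 * l.length + 1 + 1 by simp [List.length_append]; ring]
      rw [← heq]
      exact htot
  have hwS : ∀ w ∈ S, φ w * (ψ (π w))⁻¹ ∈ Cn (2 * m) D := by
    intro w hw
    have h := key (fgLetters w) (hletterC w hw) (hlet1 w hw) (hpre w hw)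
    rw [fgLetters_prod] at h
    have hlen : (fgLetters w).length ≤ m := by rw [hm]; exact Finset.le_sup (f := fun w => (fgLetters w).length) hw
    exact CnAux.Cn_mono hD1 (by omega) h
  refine ⟨i, φ, ?_⟩
  rw [Set.eq_empty_iff_forall_notMem]
  rintro z ⟨⟨y, hyY, rfl⟩, hzC⟩
  have hyS : y ∈ S := Finset.mem_union_left _ hyY
  have h1 : φ y * (ψ (π y))⁻¹ ∈ Cn (2 * m) D := hwS y hyS
  have hsub : ((fun g => φ g) '' (Φ : Set (FreeGroup α))) ⊆ Cn (2 * m) D := by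
    rintro _ ⟨f, hf, rfl⟩
    have hfS : f ∈ S := Finset.mem_union_right _ hf
    have h := hwS f hfS
    have hf1 : π f = 1 := (QuotientGroup.eq_one_iff f).mpr (hΦ hf)
    rwa [hf1, hψ1, inv_one, mul_one] at h
  have h2 : φ y ∈ Cn (n * (2 * m)) D :=
    CnAux.Cn_comp hD1 (CnAux.Cn_subset_Cn hsub hzC)
  have h3 : ψ (π y) ∈ Cn (2 * m + n * (2 * m)) D := by
    have h := CnAux.mul_mem_Cn (CnAux.inv_mem_Cn h1) h2
    have : (φ y * (ψ (π y))⁻¹)⁻¹ * φ y = ψ (π y) := by group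
    rwa [this] at h
  have h4 : ψ (π y) ∈ Cn (2 * m * (n + 1)) D :=
    CnAux.Cn_mono hD1 (Nat.le_of_eq (by ring)) h3
  have h5 : ψ (π y) ∈ ψ '' ((Φ' : Set (FreeGroup α ⧸ N)) \ {1}) := by
    refine ⟨π y, ⟨hπS y hyS, ?_⟩, rfl⟩
    simp only [Set.mem_singleton_iff]
    intro hcon
    exact hY hyY ((QuotientGroup.eq_one_iff y).mp hcon)
  exact Set.eq_empty_iff_forall_notMem.mp hdisj _ ⟨h5, h4⟩
end
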